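/- Let P and Q be probability measures on the same measurable space with densities p, q with respect to a dominating measure ν, and let X be a square-integrable random variable. Then (E_P[X] - E_Q[X])² · ((1/TV(P,Q)) - 1) / 2 ≤ Var_P(X) + Var_Q(X), where TV(P,Q) = (1/2)∫|p-q| dν is the total variation distance (with the left side interpreted as 0 when TV(P,Q)=0). -/

import Mathlib

open MeasureTheory ProbabilityTheory
open scoped ENNReal NNReal

lemma variance_congr' {Ω : Type*} [MeasurableSpace Ω] {μ : Measure Ω} {X Y : Ω → ℝ}
    (h : X =ᵐ[μ] Y) : variance X μ = variance Y μ := by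
  have hi : (∫ ω, X ω ∂μ) = ∫ ω, Y ω ∂μ := integral_congr_ae h
  rw [variance, variance, evariance, evariance]
  congr 1
  refine lintegral_congr_ae (h.mono fun ω hω => ?_)
  simp only [hω, hi]

set_option maxHeartbeats 1000000 in
lemma key_lemma {Ω : Type*} [MeasurableSpace Ω] (ν P Q : Measure Ω)
    (p q : Ω → ℝ) (hpm : Measurable p) (hqm : Measurable q)
    (hp0 : ∀ ω, 0 ≤ p ω) (hq0 : ∀ ω, 0 ≤ q ω)
    (hP : P = ν.withDensity fun ω => ENNReal.ofReal (p ω))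
    (hQ : Q = ν.withDensity fun ω => ENNReal.ofReal (q ω))
    [IsProbabilityMeasure P] [IsProbabilityMeasure Q]
    (X : Ω → ℝ) (hXm : Measurable X) (hXP : MemLp X 2 P) (hXQ : MemLp X 2 Q) :
    (if (1 / 2 : ℝ) * ∫ ω, |p ω - q ω| ∂ν = 0 then 0 else
      (∫ ω, X ω ∂P - ∫ ω, X ω ∂Q) ^ 2 *
        (1 / ((1 / 2 : ℝ) * ∫ ω, |p ω - q ω| ∂ν) - 1) / 2) ≤
      variance X P + variance X Q := by
  have hVP : 0 ≤ variance X P := variance_nonneg X P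
  have hVQ : 0 ≤ variance X Q := variance_nonneg X Q
  by_cases ht0 : (1 / 2 : ℝ) * ∫ ω, |p ω - q ω| ∂ν = 0
  · rw [if_pos ht0]; linarith
  rw [if_neg ht0]
  set t : ℝ := (1 / 2 : ℝ) * ∫ ω, |p ω - q ω| ∂ν with htdef
  have hint_nn : 0 ≤ ∫ ω, |p ω - q ω| ∂ν := integral_nonneg fun ω => abs_nonneg _
  have htnn : 0 ≤ t := by rw [htdef]; linarith
  have ht : 0 < t := htnn.lt_of_ne (Ne.symm ht0)
  clear_value t
  set μP : ℝ := ∫ ω, X ω ∂P with hμP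
  set μQ : ℝ := ∫ ω, X ω ∂Q with hμQ
  by_cases hΔ0 : μP - μQ = 0
  · rw [hΔ0]
    have : (0:ℝ) ^ 2 * (1 / t - 1) / 2 = 0 := by ring
    rw [this]; linarith
  set c : ℝ := (μP + μQ) / 2 with hc
  set Δ : ℝ := μP - μQ with hΔdef
  have hΔne : Δ ≠ 0 := hΔ0
  set Y : Ω → ℝ := fun ω => X ω - c with hY
  clear_value μP μQ c Δ
  -- densities as NNReal
  have hpnn : Measurable fun ω => (p ω).toNNReal := measurable_real_toNNReal.comp hpm
  have hqnn : Measurable fun ω => (q ω).toNNReal := measurable_real_toNNReal.comp hqm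
  have hPd : P = ν.withDensity fun ω => ((p ω).toNNReal : ℝ≥0∞) := hP
  have hQd : Q = ν.withDensity fun ω => ((q ω).toNNReal : ℝ≥0∞) := hQ
  -- transfer of integrals
  have transferP : ∀ g : Ω → ℝ, (∫ ω, g ω ∂P) = ∫ ω, p ω * g ω ∂ν := by
    intro g
    rw [hPd, integral_withDensity_eq_integral_smul hpnn]
    refine integral_congr_ae (Filter.Eventually.of_forall fun ω => ?_)
    simp [NNReal.smul_def, Real.coe_toNNReal _ (hp0 ω)]
  have transferQ : ∀ g : Ω → ℝ, (∫ ω, g ω ∂Q) = ∫ ω, q ω * g ω ∂ν := by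
    intro g
    rw [hQd, integral_withDensity_eq_integral_smul hqnn]
    refine integral_congr_ae (Filter.Eventually.of_forall fun ω => ?_)
    simp [NNReal.smul_def, Real.coe_toNNReal _ (hq0 ω)]
  have transferIP : ∀ g : Ω → ℝ, Integrable g P → Integrable (fun ω => p ω * g ω) ν := by
    intro g hg
    rw [hPd, integrable_withDensity_iff_integrable_smul hpnn] at hg
    refine hg.congr (Filter.Eventually.of_forall fun ω => ?_)
    simp [NNReal.smul_def, Real.coe_toNNReal _ (hp0 ω)]
  have transferIQ : ∀ g : Ω → ℝ, Integrable g Q → Integrable (fun ω => q ω * g ω) ν := by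
    intro g hg
    rw [hQd, integrable_withDensity_iff_integrable_smul hqnn] at hg
    refine hg.congr (Filter.Eventually.of_forall fun ω => ?_)
    simp [NNReal.smul_def, Real.coe_toNNReal _ (hq0 ω)]
  -- integrability of densities
  have hIp : Integrable p ν := by
    have := transferIP (fun _ => (1:ℝ)) (integrable_const 1)
    simpa using this
  have hIq : Integrable q ν := by
    have := transferIQ (fun _ => (1:ℝ)) (integrable_const 1)
    simpa using this
  -- Y facts
  have hYmemP : MemLp Y 2 P := hXP.sub (memLp_const c)
  have hYmemQ : MemLp Y 2 Q := hXQ.sub (memLp_const c)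
  have hYiP : Integrable Y P := hYmemP.integrable one_le_two
  have hYiQ : Integrable Y Q := hYmemQ.integrable one_le_two
  have hY2iP : Integrable (fun ω => Y ω ^ 2) P := hYmemP.integrable_sq
  have hY2iQ : Integrable (fun ω => Y ω ^ 2) Q := hYmemQ.integrable_sq
  have hIYp : Integrable (fun ω => p ω * Y ω) ν := transferIP _ hYiP
  have hIYq : Integrable (fun ω => q ω * Y ω) ν := transferIQ _ hYiQ
  have hIY2p : Integrable (fun ω => p ω * Y ω ^ 2) ν := transferIP _ hY2iP
  have hIY2q : Integrable (fun ω => q ω * Y ω ^ 2) ν := transferIQ _ hY2iQ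
  -- positive and negative parts
  set fp : Ω → ℝ := fun ω => max (p ω - q ω) 0 with hfp
  set fm : Ω → ℝ := fun ω => max (q ω - p ω) 0 with hfm
  have hfpm : Measurable fp := (hpm.sub hqm).max measurable_const
  have hfmm : Measurable fm := (hqm.sub hpm).max measurable_const
  have hfp0 : ∀ ω, 0 ≤ fp ω := fun ω => le_max_right _ _
  have hfm0 : ∀ ω, 0 ≤ fm ω := fun ω => le_max_right _ _
  have hfple : ∀ ω, fp ω ≤ p ω := fun ω => max_le (by linarith [hq0 ω]) (hp0 ω)
  have hfmle : ∀ ω, fm ω ≤ q ω := fun ω => max_le (by linarith [hp0 ω]) (hq0 ω)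
  have hIfp : Integrable fp ν := by
    refine hIp.mono' hfpm.aestronglyMeasurable (Filter.Eventually.of_forall fun ω => ?_)
    rw [Real.norm_eq_abs, abs_of_nonneg (hfp0 ω)]; exact hfple ω
  have hIfm : Integrable fm ν := by
    refine hIq.mono' hfmm.aestronglyMeasurable (Filter.Eventually.of_forall fun ω => ?_)
    rw [Real.norm_eq_abs, abs_of_nonneg (hfm0 ω)]; exact hfmle ω
  have hsub : ∀ ω, fp ω - fm ω = p ω - q ω := by
    intro ω
    rcases le_total (p ω) (q ω) with h | h
    · rw [hfp, hfm]; simp only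
      rw [max_eq_right (by linarith), max_eq_left (by linarith)]; ring
    · rw [hfp, hfm]; simp only
      rw [max_eq_left (by linarith), max_eq_right (by linarith)]; ring
  have habs : ∀ ω, |p ω - q ω| = fp ω + fm ω := by
    intro ω
    rcases le_total (p ω) (q ω) with h | h
    · rw [abs_of_nonpos (by linarith), hfp, hfm]; simp only
      rw [max_eq_right (by linarith), max_eq_left (by linarith)]; ring
    · rw [abs_of_nonneg (by linarith), hfp, hfm]; simp only
      rw [max_eq_left (by linarith), max_eq_right (by linarith)]; ring
  -- total masses
  have hip1 : (∫ ω, p ω ∂ν) = 1 := by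
    have := transferP (fun _ => (1:ℝ))
    simpa using this.symm
  have hiq1 : (∫ ω, q ω ∂ν) = 1 := by
    have := transferQ (fun _ => (1:ℝ))
    simpa using this.symm
  have hsum : (∫ ω, fp ω ∂ν) + ∫ ω, fm ω ∂ν = 2 * t := by
    rw [← integral_add hIfp hIfm,
      show (∫ ω, fp ω + fm ω ∂ν) = ∫ ω, |p ω - q ω| ∂ν from
        integral_congr_ae (Filter.Eventually.of_forall fun ω => (habs ω).symm), htdef]
    ring
  have hdiff : (∫ ω, fp ω ∂ν) - ∫ ω, fm ω ∂ν = 0 := by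
    rw [← integral_sub hIfp hIfm,
      show (∫ ω, fp ω - fm ω ∂ν) = ∫ ω, p ω - q ω ∂ν from
        integral_congr_ae (Filter.Eventually.of_forall fun ω => hsub ω),
      integral_sub hIp hIq, hip1, hiq1]
    ring
  have hfpt : (∫ ω, fp ω ∂ν) = t := by linarith
  have hfmt : (∫ ω, fm ω ∂ν) = t := by linarith
  -- integrability of fp * Y etc.
  have hIfpY : Integrable (fun ω => fp ω * Y ω) ν := by
    refine hIYp.abs.mono' ((hfpm.mul (hXm.sub measurable_const))).aestronglyMeasurable
      (Filter.Eventually.of_forall fun ω => ?_)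
    rw [Real.norm_eq_abs, abs_mul, abs_mul, abs_of_nonneg (hfp0 ω), abs_of_nonneg (hp0 ω)]
    exact mul_le_mul_of_nonneg_right (hfple ω) (abs_nonneg _)
  have hIfmY : Integrable (fun ω => fm ω * Y ω) ν := by
    refine hIYq.abs.mono' ((hfmm.mul (hXm.sub measurable_const))).aestronglyMeasurable
      (Filter.Eventually.of_forall fun ω => ?_)
    rw [Real.norm_eq_abs, abs_mul, abs_mul, abs_of_nonneg (hfm0 ω), abs_of_nonneg (hq0 ω)]
    exact mul_le_mul_of_nonneg_right (hfmle ω) (abs_nonneg _)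
  -- min part
  set mn : Ω → ℝ := fun ω => min (p ω) (q ω) with hmn
  have hmnm : Measurable mn := hpm.min hqm
  have hIMnY : Integrable (fun ω => mn ω * Y ω) ν := by
    refine hIYp.abs.mono' ((hmnm.mul (hXm.sub measurable_const))).aestronglyMeasurable
      (Filter.Eventually.of_forall fun ω => ?_)
    rw [Real.norm_eq_abs, abs_mul, abs_mul, abs_of_nonneg (le_min (hp0 ω) (hq0 ω)),
      abs_of_nonneg (hp0 ω)]
    exact mul_le_mul_of_nonneg_right (min_le_left _ _) (abs_nonneg _)
  have hpdecomp : ∀ ω, p ω = fp ω + mn ω := by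
    intro ω
    rcases le_total (p ω) (q ω) with h | h
    · rw [hfp, hmn]; simp only
      rw [max_eq_right (by linarith), min_eq_left h]; ring
    · rw [hfp, hmn]; simp only
      rw [max_eq_left (by linarith), min_eq_right h]; ring
  have hqdecomp : ∀ ω, q ω = fm ω + mn ω := by
    intro ω
    rcases le_total (p ω) (q ω) with h | h
    · rw [hfm, hmn]; simp only
      rw [max_eq_left (by linarith), min_eq_left h]; ring
    · rw [hfm, hmn]; simp only
      rw [max_eq_right (by linarith), min_eq_right h]; ring
  -- Delta as difference of integrals against fp, fm
  have hYP : (∫ ω, Y ω ∂P) = Δ / 2 := by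
    simp only [hY]
    rw [integral_sub (hXP.integrable one_le_two) (integrable_const c), integral_const]
    simp only [probReal_univ, measure_univ, ENNReal.toReal_one, smul_eq_mul, one_mul]
    rw [hΔdef, hc, ← hμP]; ring
  have hYQ : (∫ ω, Y ω ∂Q) = -(Δ / 2) := by
    simp only [hY]
    rw [integral_sub (hXQ.integrable one_le_two) (integrable_const c), integral_const]
    simp only [probReal_univ, measure_univ, ENNReal.toReal_one, smul_eq_mul, one_mul]
    rw [hΔdef, hc, ← hμQ]; ring
  have hDelta : Δ = (∫ ω, fp ω * Y ω ∂ν) - ∫ ω, fm ω * Y ω ∂ν := by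
    have h1 : (∫ ω, Y ω ∂P) = (∫ ω, fp ω * Y ω ∂ν) + ∫ ω, mn ω * Y ω ∂ν := by
      rw [transferP Y, ← integral_add hIfpY hIMnY]
      refine integral_congr_ae (Filter.Eventually.of_forall fun ω => ?_)
      show p ω * Y ω = fp ω * Y ω + mn ω * Y ω
      rw [hpdecomp ω]; ring
    have h2 : (∫ ω, Y ω ∂Q) = (∫ ω, fm ω * Y ω ∂ν) + ∫ ω, mn ω * Y ω ∂ν := by
      rw [transferQ Y, ← integral_add hIfmY hIMnY]
      refine integral_congr_ae (Filter.Eventually.of_forall fun ω => ?_)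
      show q ω * Y ω = fm ω * Y ω + mn ω * Y ω
      rw [hqdecomp ω]; ring
    rw [h1] at hYP
    rw [h2] at hYQ
    linarith
  -- second moments
  set A : ℝ := ∫ ω, Y ω ^ 2 ∂P with hA
  set B : ℝ := ∫ ω, Y ω ^ 2 ∂Q with hB
  have hAval : A = variance X P + (Δ / 2) ^ 2 := by
    have hvar := variance_eq_sub hXP
    simp only [Pi.pow_apply] at hvar
    have hexp : A = (∫ ω, X ω ^ 2 ∂P) - 2 * c * μP + c ^ 2 := by
      rw [hA]
      have he : ∀ ω, Y ω ^ 2 = (X ω ^ 2 - (2 * c) * X ω) + c ^ 2 := fun ω => by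
        simp only [hY]; ring
      rw [integral_congr_ae (Filter.Eventually.of_forall he)]
      have hi1 : Integrable (fun ω => X ω ^ 2 - (2 * c) * X ω) P :=
        hXP.integrable_sq.sub ((hXP.integrable one_le_two).const_mul _)
      rw [integral_add hi1 (integrable_const _),
        integral_sub hXP.integrable_sq ((hXP.integrable one_le_two).const_mul _),
        integral_const_mul, integral_const]
      simp only [probReal_univ, measure_univ, ENNReal.toReal_one, smul_eq_mul, one_mul, ← hμP]
    rw [hexp, hvar, hΔdef, hc, ← hμP]; ring
  have hBval : B = variance X Q + (Δ / 2) ^ 2 := by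
    have hvar := variance_eq_sub hXQ
    simp only [Pi.pow_apply] at hvar
    have hexp : B = (∫ ω, X ω ^ 2 ∂Q) - 2 * c * μQ + c ^ 2 := by
      rw [hB]
      have he : ∀ ω, Y ω ^ 2 = (X ω ^ 2 - (2 * c) * X ω) + c ^ 2 := fun ω => by
        simp only [hY]; ring
      rw [integral_congr_ae (Filter.Eventually.of_forall he)]
      have hi1 : Integrable (fun ω => X ω ^ 2 - (2 * c) * X ω) Q :=
        hXQ.integrable_sq.sub ((hXQ.integrable one_le_two).const_mul _)
      rw [integral_add hi1 (integrable_const _),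
        integral_sub hXQ.integrable_sq ((hXQ.integrable one_le_two).const_mul _),
        integral_const_mul, integral_const]
      simp only [probReal_univ, measure_univ, ENNReal.toReal_one, smul_eq_mul, one_mul, ← hμQ]
    rw [hexp, hvar, hΔdef, hc, ← hμQ]; ring
  have hABpos : 0 < A + B := by
    have h1 : (0:ℝ) < (Δ / 2) ^ 2 := by positivity
    rw [hAval, hBval]; linarith
  have hAint : (∫ ω, p ω * Y ω ^ 2 ∂ν) = A := (transferP _).symm
  have hBint : (∫ ω, q ω * Y ω ^ 2 ∂ν) = B := (transferQ _).symm
  -- AM-GM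
  set s : ℝ := Real.sqrt ((A + B) / (2 * t)) with hs
  have hspos : 0 < s := Real.sqrt_pos.mpr (by positivity)
  have hssq : s ^ 2 = (A + B) / (2 * t) := Real.sq_sqrt (by positivity)
  have hAB : A + B = 2 * t * s ^ 2 := by
    rw [hssq]; field_simp
  have hptw : ∀ (f : Ω → ℝ), (∀ ω, 0 ≤ f ω) → ∀ (r : Ω → ℝ), (∀ ω, f ω ≤ r ω) →
      ∀ ω, |f ω * Y ω| ≤ (1 / (2 * s)) * (r ω * Y ω ^ 2) + (s / 2) * f ω := by
    intro f hf0 r hfr ω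
    have h1 : |f ω * Y ω| = f ω * |Y ω| := by rw [abs_mul, abs_of_nonneg (hf0 ω)]
    have h2 : 2 * s * |Y ω| ≤ Y ω ^ 2 + s ^ 2 := by
      have e : (|Y ω| - s) ^ 2 = |Y ω| ^ 2 - 2 * s * |Y ω| + s ^ 2 := by ring
      have e2 : |Y ω| ^ 2 = Y ω ^ 2 := sq_abs _
      have e3 := sq_nonneg (|Y ω| - s)
      linarith
    have h3 : f ω * (2 * s * |Y ω|) ≤ f ω * (Y ω ^ 2 + s ^ 2) :=
      mul_le_mul_of_nonneg_left h2 (hf0 ω)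
    have h4 : f ω * Y ω ^ 2 ≤ r ω * Y ω ^ 2 :=
      mul_le_mul_of_nonneg_right (hfr ω) (sq_nonneg _)
    rw [h1, ← sub_nonneg]
    have expand : (1 / (2 * s)) * (r ω * Y ω ^ 2) + (s / 2) * f ω - f ω * |Y ω|
        = (r ω * Y ω ^ 2 + s ^ 2 * f ω - 2 * s * (f ω * |Y ω|)) / (2 * s) := by
      field_simp
    rw [expand]
    apply div_nonneg _ (by linarith)
    have h5 : f ω * (2 * s * |Y ω|) = 2 * s * (f ω * |Y ω|) := by ring
    have h6 : f ω * (Y ω ^ 2 + s ^ 2) = f ω * Y ω ^ 2 + s ^ 2 * f ω := by ring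
    linarith
  clear_value A B s
  have hsne : s ≠ 0 := ne_of_gt hspos
  have htne : t ≠ 0 := ne_of_gt ht
  have hboundp : (∫ ω, |fp ω * Y ω| ∂ν) ≤ (1 / (2 * s)) * A + (s / 2) * t := by
    have hmono := integral_mono
      (g := fun ω => (1 / (2 * s)) * (p ω * Y ω ^ 2) + (s / 2) * fp ω) hIfpY.abs
      ((hIY2p.const_mul (1 / (2 * s))).add (hIfp.const_mul (s / 2)))
      (hptw fp hfp0 p hfple)
    exact hmono.trans_eq (by
      rw [integral_add (hIY2p.const_mul (1 / (2 * s))) (hIfp.const_mul (s / 2)),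
        integral_const_mul, integral_const_mul, hAint, hfpt])
  have hboundq : (∫ ω, |fm ω * Y ω| ∂ν) ≤ (1 / (2 * s)) * B + (s / 2) * t := by
    have hmono := integral_mono
      (g := fun ω => (1 / (2 * s)) * (q ω * Y ω ^ 2) + (s / 2) * fm ω) hIfmY.abs
      ((hIY2q.const_mul (1 / (2 * s))).add (hIfm.const_mul (s / 2)))
      (hptw fm hfm0 q hfmle)
    exact hmono.trans_eq (by
      rw [integral_add (hIY2q.const_mul (1 / (2 * s))) (hIfm.const_mul (s / 2)),
        integral_const_mul, integral_const_mul, hBint, hfmt])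
  have habsint1 : |∫ ω, fp ω * Y ω ∂ν| ≤ ∫ ω, |fp ω * Y ω| ∂ν := by
    have h := norm_integral_le_integral_norm (μ := ν) (fun ω => fp ω * Y ω)
    simp only [Real.norm_eq_abs] at h
    exact h
  have habsint2 : |∫ ω, fm ω * Y ω ∂ν| ≤ ∫ ω, |fm ω * Y ω| ∂ν := by
    have h := norm_integral_le_integral_norm (μ := ν) (fun ω => fm ω * Y ω)
    simp only [Real.norm_eq_abs] at h
    exact h
  have hfinal : |Δ| ≤ (1 / (2 * s)) * (A + B) + s * t := by
    have h := abs_sub (∫ ω, fp ω * Y ω ∂ν) (∫ ω, fm ω * Y ω ∂ν)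
    rw [hDelta]
    calc |(∫ ω, fp ω * Y ω ∂ν) - ∫ ω, fm ω * Y ω ∂ν|
        ≤ |∫ ω, fp ω * Y ω ∂ν| + |∫ ω, fm ω * Y ω ∂ν| := abs_sub _ _
      _ ≤ ((1 / (2 * s)) * A + (s / 2) * t) + ((1 / (2 * s)) * B + (s / 2) * t) := by
          refine add_le_add (habsint1.trans hboundp) (habsint2.trans hboundq)
      _ = (1 / (2 * s)) * (A + B) + s * t := by ring
  have hid : (1 / (2 * s)) * (A + B) + s * t = 2 * s * t := by
    rw [hAB]; field_simp; ring
  rw [hid] at hfinal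
  have hΔsq : Δ ^ 2 ≤ 2 * t * (A + B) := by
    have h := pow_le_pow_left₀ (abs_nonneg Δ) hfinal 2
    rw [sq_abs] at h
    calc Δ ^ 2 ≤ (2 * s * t) ^ 2 := h
      _ = 2 * t * (2 * t * s ^ 2) := by ring
      _ = 2 * t * (A + B) := by rw [← hAB]
  -- conclude
  have h1t : (1 - t) / t = 1 / t - 1 := by rw [sub_div, div_self htne]
  have heq : Δ ^ 2 * (1 / t - 1) / 2 = (Δ ^ 2 * (1 - t)) / (2 * t) := by
    rw [← h1t]; ring
  rw [heq, div_le_iff₀ (by positivity)]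
  rw [hAval, hBval] at hΔsq
  have hexp : 2 * t * (variance X P + (Δ / 2) ^ 2 + (variance X Q + (Δ / 2) ^ 2))
      = 2 * t * (variance X P + variance X Q) + t * Δ ^ 2 := by ring
  rw [hexp] at hΔsq
  nlinarith [hΔsq]

/-- Change-of-expectation inequality via total variation:
`(E_P[X] - E_Q[X])² ((1/TV(P,Q)) - 1) / 2 ≤ Var_P(X) + Var_Q(X)`,
with the left-hand side interpreted as `0` when `TV(P,Q) = 0`. -/
theorem stmt0 {Ω : Type*} [MeasurableSpace Ω] (ν P Q : Measure Ω)
    (p q : Ω → ℝ) (hpm : Measurable p) (hqm : Measurable q)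
    (hp0 : ∀ ω, 0 ≤ p ω) (hq0 : ∀ ω, 0 ≤ q ω)
    (hP : P = ν.withDensity fun ω => ENNReal.ofReal (p ω))
    (hQ : Q = ν.withDensity fun ω => ENNReal.ofReal (q ω))
    [IsProbabilityMeasure P] [IsProbabilityMeasure Q]
    (X : Ω → ℝ) (hXP : MemLp X 2 P) (hXQ : MemLp X 2 Q) :
    (if (1 / 2 : ℝ) * ∫ ω, |p ω - q ω| ∂ν = 0 then 0 else
      (∫ ω, X ω ∂P - ∫ ω, X ω ∂Q) ^ 2 *
        (1 / ((1 / 2 : ℝ) * ∫ ω, |p ω - q ω| ∂ν) - 1) / 2) ≤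
      variance X P + variance X Q := by
  have hXmeas : AEStronglyMeasurable X (P + Q) :=
    hXP.aestronglyMeasurable.add_measure hXQ.aestronglyMeasurable
  set X' := hXmeas.mk X with hX'
  have hXX' : X =ᵐ[P + Q] X' := hXmeas.ae_eq_mk
  have hP' : X =ᵐ[P] X' := hXX'.filter_mono (ae_mono (Measure.le_add_right le_rfl))
  have hQ' : X =ᵐ[Q] X' := hXX'.filter_mono (ae_mono (Measure.le_add_left le_rfl))
  have hX'm : Measurable X' := hXmeas.stronglyMeasurable_mk.measurable
  have h1 : (∫ ω, X ω ∂P) = ∫ ω, X' ω ∂P := integral_congr_ae hP'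
  have h2 : (∫ ω, X ω ∂Q) = ∫ ω, X' ω ∂Q := integral_congr_ae hQ'
  have h3 : variance X P = variance X' P := variance_congr' hP'
  have h4 : variance X Q = variance X' Q := variance_congr' hQ'
  rw [h1, h2, h3, h4]
  exact key_lemma ν P Q p q hpm hqm hp0 hq0 hP hQ X' hX'm (hXP.ae_eq hP') (hXQ.ae_eq hQ')
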